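/- Let h : ℝ → ℝ be continuous and nondecreasing on [0,∞), let a, b ≥ 0, let s be a point of the Euclidean plane ℝ², and let t₁, …, tₙ (n ≥ 1) be points of ℝ². Then the function Φ(p) = max( a · h(dist(p, s)), b · max_{1 ≤ i ≤ n} h(dist(p, tᵢ)) ) attains its global infimum over ℝ² at some point p* belonging to convexHull ℝ ({s} ∪ {t₁, …, tₙ}); i.e., there exists p* in this convex hull with Φ(p*) ≤ Φ(p) for all p ∈ ℝ². (Existence of the point p* of Equation (8) inside the convex hull of the nodes.) -/

import Mathlib

open RealInnerProductSpace

/-- Existence of the point `p*` of Equation (8) inside the convex hull of the nodes: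
the objective `max (a·h(dist p s), b·maxᵢ h(dist p tᵢ))` attains its global infimum
over the plane at a point of the convex hull of `{s} ∪ {t₁,…,tₙ}`. -/
theorem pstar_exists_in_convexHull
    (h : ℝ → ℝ) (hcont : ContinuousOn h (Set.Ici 0)) (hmono : MonotoneOn h (Set.Ici 0))
    (a b : ℝ) (ha : 0 ≤ a) (hb : 0 ≤ b)
    (s : EuclideanSpace ℝ (Fin 2))
    (n : ℕ) (hn : 1 ≤ n) (t : Fin n → EuclideanSpace ℝ (Fin 2)) :
    ∃ pstar ∈ convexHull ℝ ({s} ∪ Set.range t),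
      ∀ p : EuclideanSpace ℝ (Fin 2),
        max (a * h (dist pstar s))
            (b * Finset.univ.sup' (Finset.univ_nonempty_iff.mpr ⟨⟨0, hn⟩⟩)
              (fun i => h (dist pstar (t i)))) ≤
        max (a * h (dist p s))
            (b * Finset.univ.sup' (Finset.univ_nonempty_iff.mpr ⟨⟨0, hn⟩⟩)
              (fun i => h (dist p (t i)))) := by
  set hne : (Finset.univ : Finset (Fin n)).Nonempty :=
    Finset.univ_nonempty_iff.mpr ⟨⟨0, hn⟩⟩
  set Φ : EuclideanSpace ℝ (Fin 2) → ℝ := fun p =>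
    max (a * h (dist p s)) (b * Finset.univ.sup' hne (fun i => h (dist p (t i)))) with hΦ
  set K : Set (EuclideanSpace ℝ (Fin 2)) := convexHull ℝ ({s} ∪ Set.range t) with hK
  have hfin : ({s} ∪ Set.range t : Set (EuclideanSpace ℝ (Fin 2))).Finite :=
    (Set.finite_singleton s).union (Set.finite_range t)
  have hKcomp : IsCompact K := hfin.isCompact_convexHull ℝ
  have hKne : K.Nonempty := ⟨s, subset_convexHull ℝ _ (Or.inl rfl)⟩
  have hconv : Convex ℝ K := convex_convexHull ℝ _
  have hsK : s ∈ K := subset_convexHull ℝ _ (Or.inl rfl)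
  have htK : ∀ i, t i ∈ K := fun i => subset_convexHull ℝ _ (Or.inr ⟨i, rfl⟩)
  -- continuity of Φ
  have hdc : ∀ q : EuclideanSpace ℝ (Fin 2), Continuous fun p => h (dist p q) := by
    intro q
    exact hcont.comp_continuous (continuous_id.dist continuous_const) fun x => dist_nonneg
  have hΦcont : Continuous Φ := by
    apply Continuous.max
    · exact continuous_const.mul (hdc s)
    · apply continuous_const.mul
      apply continuous_iff_continuousAt.mpr
      intro x
      exact ContinuousAt.finset_sup'_apply hne fun i _ => ((hdc (t i)).continuousAt)
  obtain ⟨pstar, hpK, hmin⟩ := hKcomp.exists_isMinOn hKne hΦcont.continuousOn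
  refine ⟨pstar, hpK, fun p => ?_⟩
  -- project p onto K
  obtain ⟨q, hqK, hqmin⟩ := exists_norm_eq_iInf_of_complete_convex hKne
    hKcomp.isClosed.isComplete hconv p
  have hineq := (norm_eq_iInf_iff_real_inner_le_zero hconv hqK).mp hqmin
  have hdist : ∀ w ∈ K, dist q w ≤ dist p w := by
    intro w hw
    have h1 : (inner ℝ (p - q) (w - q) : ℝ) ≤ 0 := hineq w hw
    have h2 : ‖w - p‖ ^ 2 = ‖w - q‖ ^ 2 - 2 * (inner ℝ (w - q) (p - q) : ℝ) + ‖p - q‖ ^ 2 := by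
      have := @norm_sub_sq_real (EuclideanSpace ℝ (Fin 2)) _ _ (w - q) (p - q)
      simpa [sub_sub_sub_cancel_right] using this
    have h3 : (inner ℝ (w - q) (p - q) : ℝ) ≤ 0 := by rwa [real_inner_comm] at h1
    have h4 : ‖w - q‖ ^ 2 ≤ ‖w - p‖ ^ 2 := by nlinarith [norm_nonneg (p - q)]
    have h5 : ‖w - q‖ ≤ ‖w - p‖ := by
      nlinarith [norm_nonneg (w - q), norm_nonneg (w - p)]
    rw [dist_comm q w, dist_comm p w, dist_eq_norm, dist_eq_norm]
    exact h5
  have hΦq : Φ q ≤ Φ p := by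
    apply max_le_max
    · apply mul_le_mul_of_nonneg_left _ ha
      exact hmono (Set.mem_Ici.mpr dist_nonneg) (Set.mem_Ici.mpr dist_nonneg) (hdist s hsK)
    · apply mul_le_mul_of_nonneg_left _ hb
      apply Finset.sup'_le
      intro i _
      refine le_trans ?_ (Finset.le_sup' (fun i => h (dist p (t i))) (Finset.mem_univ i))
      exact hmono (Set.mem_Ici.mpr dist_nonneg) (Set.mem_Ici.mpr dist_nonneg) (hdist (t i) (htK i))
  exact le_trans (hmin hqK) hΦq
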